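/- arXiv:1103.5639 — 3 statements merged into one kernel-verified Lean document; each statement's English description precedes it below -/
import Mathlib

section
/- Let H be a real Hilbert space of square-integrable random vectors, and let X, Y, Z be random vectors with finite second moments. The set B of random vectors of the form A·Y + b(Z), where A ranges over deterministic linear maps and b over measurable functions of Z with finite second moment, is a linear subspace of H that is closed under the L² norm. -/
open MeasureTheory Matrix ProbabilityTheory

noncomputable def condExpVec {Ω : Type} {mΩ : MeasurableSpace Ω} (μ : Measure Ω)
    (m : MeasurableSpace Ω) {N : ℕ} (Y : Ω → Fin N → ℝ) : Ω → Fin N → ℝ :=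
  fun ω i => (μ[(fun ω' => Y ω' i)|m]) ω

noncomputable def meanVec {Ω : Type} {mΩ : MeasurableSpace Ω} (μ : Measure Ω)
    {N : ℕ} (Y : Ω → Fin N → ℝ) : Fin N → ℝ := fun i => ∫ ω, Y ω i ∂μ

noncomputable def crossCov {Ω : Type} {mΩ : MeasurableSpace Ω} (μ : Measure Ω)
    {M N : ℕ} (X : Ω → Fin M → ℝ) (Y : Ω → Fin N → ℝ) : Matrix (Fin M) (Fin N) ℝ :=
  Matrix.of fun i j => ∫ ω, (X ω i - meanVec μ X i) * (Y ω j - meanVec μ Y j) ∂μ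

/-- The residual `Y - E[Y|m]` (the innovation `Ỹ`). -/
noncomputable def resid {Ω : Type} {mΩ : MeasurableSpace Ω} (μ : Measure Ω)
    (m : MeasurableSpace Ω) {N : ℕ} (Y : Ω → Fin N → ℝ) : Ω → Fin N → ℝ :=
  fun ω => Y ω - condExpVec (mΩ := mΩ) μ m Y ω

def IsMoorePenrose {m n : ℕ} (A : Matrix (Fin m) (Fin n) ℝ) (P : Matrix (Fin n) (Fin m) ℝ) : Prop :=
  A * P * A = A ∧ P * A * P = P ∧ (A * P)ᵀ = A * P ∧ (P * A)ᵀ = P * A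

section Aux
open MeasureTheory Filter Topology


private lemma factor_simpleFunc {α β E : Type*} [mβ : MeasurableSpace β]
    [MeasurableSpace E] [AddMonoid E] [MeasurableAdd₂ E] (Z : α → β)
    (s : @SimpleFunc α (mβ.comap Z) E) :
    ∃ b : β → E, Measurable b ∧ ∀ a, b (Z a) = s a := by
  classical
  letI : MeasurableSpace α := mβ.comap Z
  induction s using SimpleFunc.induction with
  | const c hs =>
    rename_i t
    obtain ⟨S, hS, hpre⟩ := hs
    refine ⟨fun z => if z ∈ S then c else 0, Measurable.ite hS measurable_const measurable_const,
      fun a => ?_⟩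
    simp only [SimpleFunc.piecewise_apply, SimpleFunc.coe_const, Function.const_apply,
      SimpleFunc.coe_zero, Pi.zero_apply, ← hpre, Set.mem_preimage]
  | add hdisj hf hg =>
    obtain ⟨b1, hb1, h1⟩ := hf
    obtain ⟨b2, hb2, h2⟩ := hg
    exact ⟨fun z => b1 z + b2 z, hb1.add hb2, fun a => by simp [h1, h2]⟩

private lemma exists_ae_eq_comp {Ω : Type} {mΩ : MeasurableSpace Ω} {μ : Measure Ω}
    {Q M : ℕ} {Z : Ω → Fin Q → ℝ} (hZm : Measurable Z) {g : Ω → Fin M → ℝ}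
    (hg : StronglyMeasurable[MeasurableSpace.comap Z inferInstance] g) :
    ∃ b : (Fin Q → ℝ) → Fin M → ℝ, Measurable b ∧ (fun ω => b (Z ω)) =ᵐ[μ] g := by
  have h := fun n => factor_simpleFunc Z (hg.approx n)
  choose bn hbn hbnZ using h
  have htend : ∀ ω, Tendsto (fun n => bn n (Z ω)) atTop (𝓝 (g ω)) := by
    intro ω
    have := hg.tendsto_approx ω
    simpa [hbnZ] using this
  have hmeas_set : MeasurableSet {z : Fin Q → ℝ | ∃ c, Tendsto (fun n => bn n z) atTop (𝓝 c)} :=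
    measurableSet_exists_tendsto hbn
  have hae : ∀ᵐ z ∂(μ.map Z), ∃ c, Tendsto (fun n => bn n z) atTop (𝓝 c) := by
    rw [ae_map_iff hZm.aemeasurable hmeas_set]
    exact Eventually.of_forall fun ω => ⟨g ω, htend ω⟩
  obtain ⟨b, hb, hbl⟩ := measurable_limit_of_tendsto_metrizable_ae
      (fun n => (hbn n).aemeasurable) hae
  refine ⟨b, hb, ?_⟩
  filter_upwards [ae_of_ae_map hZm.aemeasurable hbl] with ω hω
  exact tendsto_nhds_unique hω (htend ω)

private lemma isClosed_sup_fd {E : Type*} [NormedAddCommGroup E] [NormedSpace ℝ E]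
    (S T : Submodule ℝ E) (hS : IsClosed (S : Set E)) [FiniteDimensional ℝ T] :
    IsClosed ((S ⊔ T : Submodule ℝ E) : Set E) := by
  haveI : IsClosed (S : Set E) := hS
  haveI : FiniteDimensional ℝ (T.map S.mkQ) := Module.Finite.map T S.mkQ
  have hclosed : IsClosed ((T.map S.mkQ : Submodule ℝ (E ⧸ S)) : Set (E ⧸ S)) :=
    Submodule.closed_of_finiteDimensional _
  have hcont : Continuous S.mkQ :=
    AddMonoidHomClass.continuous_of_bound S.mkQ 1 fun m => by
      simpa using Submodule.Quotient.norm_mk_le S m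
  have hset : ((S ⊔ T : Submodule ℝ E) : Set E) = S.mkQ ⁻¹' (T.map S.mkQ) := by
    rw [← Submodule.comap_map_mkQ S T]; rfl
  rw [hset]
  exact hclosed.preimage hcont

end Aux

open Filter Topology in
/-- the set of estimators `A·Y + b(Z)` is a closed linear subspace of `L²`. -/
theorem stmt0 {Ω : Type} [MeasurableSpace Ω] (μ : Measure Ω) [IsProbabilityMeasure μ]
    {M N Q : ℕ} (Y : Ω → Fin N → ℝ) (Z : Ω → Fin Q → ℝ)
    (hYm : Measurable Y) (hZm : Measurable Z) (hY2 : MemLp Y 2 μ) :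
    ∃ S : Submodule ℝ (Lp (Fin M → ℝ) 2 μ),
      IsClosed (S : Set (Lp (Fin M → ℝ) 2 μ)) ∧
      ∀ f : Lp (Fin M → ℝ) 2 μ,
        f ∈ S ↔ ∃ (A : Matrix (Fin M) (Fin N) ℝ) (b : (Fin Q → ℝ) → Fin M → ℝ),
          Measurable b ∧ MemLp (fun ω => b (Z ω)) 2 μ ∧
          (f : Ω → Fin M → ℝ) =ᵐ[μ] fun ω => A.mulVec (Y ω) + b (Z ω) := by
  classical
  haveI : Fact ((1 : ENNReal) ≤ 2) := ⟨one_le_two⟩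
  have hmZle : MeasurableSpace.comap Z MeasurableSpace.pi ≤ ‹MeasurableSpace Ω› := hZm.comap_le
  have hZmZ : Measurable[MeasurableSpace.comap Z MeasurableSpace.pi] Z :=
    Measurable.of_comap_le le_rfl
  have hmem : ∀ A : Matrix (Fin M) (Fin N) ℝ, MemLp (fun ω => A.mulVec (Y ω)) 2 μ := fun A =>
    (LinearMap.toContinuousLinearMap A.mulVecLin).comp_memLp' hY2
  let Φ : Matrix (Fin M) (Fin N) ℝ →ₗ[ℝ] Lp (Fin M → ℝ) 2 μ :=
  { toFun := fun A => (hmem A).toLp _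
    map_add' := fun A B => by
      rw [← MemLp.toLp_add (hmem A) (hmem B)]
      exact MemLp.toLp_congr (hmem (A + B)) ((hmem A).add (hmem B))
        (Eventually.of_forall fun ω => by simp [Matrix.add_mulVec])
    map_smul' := fun c A => by
      rw [RingHom.id_apply, ← MemLp.toLp_const_smul c (hmem A)]
      exact MemLp.toLp_congr (hmem (c • A)) ((hmem A).const_smul c)
        (Eventually.of_forall fun ω => by simp [Matrix.smul_mulVec]) }
  have hΦ : ∀ A, (↑(Φ A) : Ω → Fin M → ℝ) =ᵐ[μ] fun ω => A.mulVec (Y ω) := fun A =>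
    MemLp.coeFn_toLp (hmem A)
  let L : Submodule ℝ (Lp (Fin M → ℝ) 2 μ) :=
    lpMeas (Fin M → ℝ) ℝ (MeasurableSpace.comap Z MeasurableSpace.pi) 2 μ
  have hL : IsClosed ((L : Submodule ℝ (Lp (Fin M → ℝ) 2 μ)) : Set (Lp (Fin M → ℝ) 2 μ)) := by
    have h := isClosed_aestronglyMeasurable (F := Fin M → ℝ) (μ := μ) (p := 2) hmZle
    have heq : ((L : Submodule ℝ (Lp (Fin M → ℝ) 2 μ)) : Set (Lp (Fin M → ℝ) 2 μ)) =
        {f : Lp (Fin M → ℝ) 2 μ |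
          AEStronglyMeasurable[MeasurableSpace.comap Z MeasurableSpace.pi] f μ} := by
      ext f
      simp only [SetLike.mem_coe, Set.mem_setOf_eq]
      exact mem_lpMeas_iff_aestronglyMeasurable
    rw [heq]
    exact h
  refine ⟨L ⊔ LinearMap.range Φ, isClosed_sup_fd _ _ hL, fun f => ?_⟩
  constructor
  · intro hf
    rw [Submodule.mem_sup] at hf
    obtain ⟨h, hhL, g, hgR, hsum⟩ := hf
    obtain ⟨A, rfl⟩ := hgR
    obtain ⟨g', hg'sm, hh⟩ := mem_lpMeas_iff_aestronglyMeasurable.mp hhL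
    obtain ⟨b, hbmeas, hbae⟩ := exists_ae_eq_comp hZm hg'sm
    have h3 : (↑h : Ω → Fin M → ℝ) =ᵐ[μ] fun ω => b (Z ω) := hh.trans hbae.symm
    refine ⟨A, b, hbmeas, (Lp.memLp h).ae_eq h3, ?_⟩
    have h1 : (↑f : Ω → Fin M → ℝ) =ᵐ[μ] ↑h + ↑(Φ A) := by
      rw [← hsum]; exact Lp.coeFn_add h (Φ A)
    filter_upwards [h1, hΦ A, h3] with ω e1 e2 e3
    rw [e1, Pi.add_apply, e2, e3, add_comm]
  · rintro ⟨A, b, hbm, hbZ2, hae⟩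
    rw [Submodule.mem_sup]
    refine ⟨hbZ2.toLp _, ?_, Φ A, ⟨A, rfl⟩, ?_⟩
    · rw [mem_lpMeas_iff_aestronglyMeasurable]
      exact ⟨fun ω => b (Z ω), (hbm.comp hZmZ).stronglyMeasurable, hbZ2.coeFn_toLp⟩
    · refine Lp.ext ?_
      have h1 := Lp.coeFn_add (hbZ2.toLp (fun ω => b (Z ω))) (Φ A)
      filter_upwards [h1, hbZ2.coeFn_toLp, hΦ A, hae] with ω e1 e2 e3 e4
      rw [e1, Pi.add_apply, e2, e3, e4, add_comm]
end

section
/- Let X, Y, Z be square-integrable random vectors and Ỹ = Y − E[Y|Z]. The estimator X̂ = Γ_{XỸ} Γ_{ỸỸ}† Ỹ + E[X|Z] minimizes the mean squared error E[‖X − (A Y + b(Z))‖²] over all matrices A ∈ ℝ^{M×N} and all square-integrable σ(Z)-measurable functions b(Z): for every such A and b, E[‖X − X̂‖²] ≤ E[‖X − (A Y + b(Z))‖²]. -/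
open MeasureTheory Matrix ProbabilityTheory

/-- The PLMMSE estimator `X̂ = Γ_{XỸ} Γ_{ỸỸ}† Ỹ + E[X|Z]`, where `P` is a matrix
playing the role of the Moore–Penrose pseudo-inverse `Γ_{ỸỸ}†`. -/
noncomputable def plmmse {Ω : Type} {mΩ : MeasurableSpace Ω} (μ : Measure Ω)
    {M N Q : ℕ} (X : Ω → Fin M → ℝ) (Y : Ω → Fin N → ℝ) (Z : Ω → Fin Q → ℝ)
    (P : Matrix (Fin N) (Fin N) ℝ) : Ω → Fin M → ℝ :=
  fun ω =>
    (crossCov μ X (resid μ (MeasurableSpace.comap Z inferInstance) Y) * P).mulVec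
      (resid μ (MeasurableSpace.comap Z inferInstance) Y ω) +
    condExpVec μ (MeasurableSpace.comap Z inferInstance) X ω


section PLMMSEproof
variable {Ω : Type} {m : MeasurableSpace Ω} [mΩ : MeasurableSpace Ω] {μ : Measure Ω}

lemma memLp_mul_int {f g : Ω → ℝ} (hf : MemLp f 2 μ) (hg : MemLp g 2 μ) :
    Integrable (fun ω => f ω * g ω) μ := by
  have h := hg.smul (φ := f) hf (r := 1)
    (hpqr := ⟨by norm_num [ENNReal.inv_two_add_inv_two]⟩)
  exact memLp_one_iff_integrable.mp h

lemma memLp_two_condexp (hm : m ≤ mΩ) [IsProbabilityMeasure μ]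
    {f : Ω → ℝ} (hf : MemLp f 2 μ) : MemLp (μ[f|m]) 2 μ := by
  have hae : (condExpL2 ℝ ℝ hm (hf.toLp f) : Ω → ℝ) =ᵐ[μ] μ[f|m] := by
    refine ae_eq_condExp_of_forall_setIntegral_eq hm (hf.integrable one_le_two)
      (fun s hs hμs => integrableOn_condExpL2_of_measure_ne_top hm hμs.ne _)
      (fun s hs hμs => ?_) (aestronglyMeasurable_condExpL2 hm _)
    rw [integral_condExpL2_eq hm (hf.toLp f) hs hμs.ne]
    exact integral_congr_ae (ae_restrict_of_ae hf.coeFn_toLp)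
  exact (Lp.memLp ((condExpL2 ℝ ℝ hm (hf.toLp f)) : Lp ℝ 2 μ)).ae_eq hae

lemma ortho (hm : m ≤ mΩ) [IsProbabilityMeasure μ]
    {f g : Ω → ℝ} (hf : MemLp f 2 μ) (hg : MemLp g 2 μ)
    (hgm : StronglyMeasurable[m] g) :
    ∫ ω, g ω * (f ω - (μ[f|m]) ω) ∂μ = 0 := by
  have hfc : MemLp (μ[f|m]) 2 μ := memLp_two_condexp hm hf
  have h1 : Integrable (fun ω => g ω * f ω) μ := memLp_mul_int hg hf
  have h2 : Integrable (fun ω => g ω * (μ[f|m]) ω) μ := memLp_mul_int hg hfc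
  have key : μ[g * f|m] =ᵐ[μ] g * μ[f|m] :=
    condExp_mul_of_stronglyMeasurable_left hgm h1 (hf.integrable one_le_two)
  have h3 : ∫ ω, g ω * f ω ∂μ = ∫ ω, g ω * (μ[f|m]) ω ∂μ := by
    have e1 := integral_condExp (μ := μ) (f := fun ω => g ω * f ω) hm
    rw [← e1]
    exact integral_congr_ae key
  have h4 : ∫ ω, g ω * (f ω - (μ[f|m]) ω) ∂μ
      = ∫ ω, g ω * f ω ∂μ - ∫ ω, g ω * (μ[f|m]) ω ∂μ := by
    rw [← integral_sub h1 h2]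
    congr 1; ext ω; ring
  rw [h4, h3, sub_self]
variable {N : ℕ} {Y : Ω → Fin N → ℝ}

lemma resid_apply (ω : Ω) (j : Fin N) :
    resid μ m Y ω j = Y ω j - (μ[fun ω' => Y ω' j|m]) ω := rfl

lemma memLp_resid (hm : m ≤ mΩ) [IsProbabilityMeasure μ]
    (hY2 : ∀ j, MemLp (fun ω => Y ω j) 2 μ) (j : Fin N) :
    MemLp (fun ω => resid μ m Y ω j) 2 μ :=
  (hY2 j).sub (memLp_two_condexp hm (hY2 j))

lemma integral_resid (hm : m ≤ mΩ) [IsProbabilityMeasure μ]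
    (hY2 : ∀ j, MemLp (fun ω => Y ω j) 2 μ) (j : Fin N) :
    ∫ ω, resid μ m Y ω j ∂μ = 0 := by
  have h1 : Integrable (fun ω => Y ω j) μ := (hY2 j).integrable one_le_two
  have h2 : Integrable (μ[fun ω => Y ω j|m]) μ := integrable_condExp
  have : ∫ ω, resid μ m Y ω j ∂μ
      = ∫ ω, Y ω j ∂μ - ∫ ω, (μ[fun ω' => Y ω' j|m]) ω ∂μ := integral_sub h1 h2
  rw [this, integral_condExp hm, sub_self]

lemma meanVec_resid (hm : m ≤ mΩ) [IsProbabilityMeasure μ]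
    (hY2 : ∀ j, MemLp (fun ω => Y ω j) 2 μ) (j : Fin N) :
    meanVec μ (resid μ m Y) j = 0 :=
  integral_resid hm hY2 j

lemma ortho_resid (hm : m ≤ mΩ) [IsProbabilityMeasure μ]
    (hY2 : ∀ j, MemLp (fun ω => Y ω j) 2 μ) {g : Ω → ℝ}
    (hg : MemLp g 2 μ) (hgm : StronglyMeasurable[m] g) (j : Fin N) :
    ∫ ω, g ω * resid μ m Y ω j ∂μ = 0 :=
  ortho hm (hY2 j) hg hgm

lemma crossCov_resid_self (hm : m ≤ mΩ) [IsProbabilityMeasure μ]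
    (hY2 : ∀ j, MemLp (fun ω => Y ω j) 2 μ) (j k : Fin N) :
    crossCov μ (resid μ m Y) (resid μ m Y) j k
      = ∫ ω, resid μ m Y ω j * resid μ m Y ω k ∂μ := by
  show (∫ ω, (resid μ m Y ω j - meanVec μ (resid μ m Y) j)
      * (resid μ m Y ω k - meanVec μ (resid μ m Y) k) ∂μ) = _
  rw [meanVec_resid hm hY2 j, meanVec_resid hm hY2 k]
  simp

lemma crossCov_X_resid (hm : m ≤ mΩ) [IsProbabilityMeasure μ] {M : ℕ}
    {X : Ω → Fin M → ℝ} (hX2 : ∀ i, MemLp (fun ω => X ω i) 2 μ)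
    (hY2 : ∀ j, MemLp (fun ω => Y ω j) 2 μ) (i : Fin M) (j : Fin N) :
    crossCov μ X (resid μ m Y) i j
      = ∫ ω, (X ω i - (μ[fun ω' => X ω' i|m]) ω) * resid μ m Y ω j ∂μ := by
  have hXc2 : MemLp (μ[fun ω' => X ω' i|m]) 2 μ := memLp_two_condexp hm (hX2 i)
  have hYt2 := memLp_resid hm hY2 j
  have h0 : crossCov μ X (resid μ m Y) i j
      = ∫ ω, (X ω i - meanVec μ X i) * resid μ m Y ω j ∂μ := by
    show (∫ ω, (X ω i - meanVec μ X i)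
        * (resid μ m Y ω j - meanVec μ (resid μ m Y) j) ∂μ) = _
    rw [meanVec_resid hm hY2 j]
    simp
  have hsplit : ∀ ω, (X ω i - meanVec μ X i) * resid μ m Y ω j
      = (X ω i - (μ[fun ω' => X ω' i|m]) ω) * resid μ m Y ω j
        + ((μ[fun ω' => X ω' i|m]) ω - meanVec μ X i) * resid μ m Y ω j := by
    intro ω; ring
  have hint1 : Integrable
      (fun ω => (X ω i - (μ[fun ω' => X ω' i|m]) ω) * resid μ m Y ω j) μ :=
    memLp_mul_int ((hX2 i).sub hXc2) hYt2
  have hint2 : Integrable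
      (fun ω => ((μ[fun ω' => X ω' i|m]) ω - meanVec μ X i) * resid μ m Y ω j) μ :=
    memLp_mul_int (hXc2.sub (memLp_const _)) hYt2
  have hzero : ∫ ω, ((μ[fun ω' => X ω' i|m]) ω - meanVec μ X i) * resid μ m Y ω j ∂μ = 0 :=
    ortho_resid hm hY2 (hXc2.sub (memLp_const _))
      (stronglyMeasurable_condExp.sub stronglyMeasurable_const) j
  rw [h0]
  calc ∫ ω, (X ω i - meanVec μ X i) * resid μ m Y ω j ∂μ
      = ∫ ω, ((X ω i - (μ[fun ω' => X ω' i|m]) ω) * resid μ m Y ω j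
        + ((μ[fun ω' => X ω' i|m]) ω - meanVec μ X i) * resid μ m Y ω j) ∂μ := by
        exact integral_congr_ae (Filter.Eventually.of_forall hsplit)
    _ = (∫ ω, (X ω i - (μ[fun ω' => X ω' i|m]) ω) * resid μ m Y ω j ∂μ)
        + ∫ ω, ((μ[fun ω' => X ω' i|m]) ω - meanVec μ X i) * resid μ m Y ω j ∂μ :=
        integral_add hint1 hint2
    _ = _ := by rw [hzero, add_zero]
lemma nullspace (hm : m ≤ mΩ) [IsProbabilityMeasure μ] {M N : ℕ}
    {X : Ω → Fin M → ℝ} {Y : Ω → Fin N → ℝ}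
    (hX2 : ∀ i, MemLp (fun ω => X ω i) 2 μ) (hY2 : ∀ j, MemLp (fun ω => Y ω j) 2 μ)
    (v : Fin N → ℝ)
    (hv : (crossCov μ (resid μ m Y) (resid μ m Y)).mulVec v = 0) :
    (crossCov μ X (resid μ m Y)).mulVec v = 0 := by
  have hYt2 : ∀ j, MemLp (fun ω => resid μ m Y ω j) 2 μ := memLp_resid hm hY2
  have hprod : ∀ j k : Fin N,
      Integrable (fun ω => (v j * v k) * (resid μ m Y ω j * resid μ m Y ω k)) μ :=
    fun j k => (memLp_mul_int (hYt2 j) (hYt2 k)).const_mul _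
  -- the integral of t^2 is zero
  have hsq : ∫ ω, (∑ j, v j * resid μ m Y ω j) ^ 2 ∂μ = 0 := by
    have expand : ∀ ω : Ω, (∑ j, v j * resid μ m Y ω j) ^ 2
        = ∑ j, ∑ k, (v j * v k) * (resid μ m Y ω j * resid μ m Y ω k) := by
      intro ω
      rw [sq, Finset.sum_mul_sum]
      refine Finset.sum_congr rfl fun j _ => Finset.sum_congr rfl fun k _ => by ring
    calc ∫ ω, (∑ j, v j * resid μ m Y ω j) ^ 2 ∂μ
        = ∫ ω, ∑ j, ∑ k, (v j * v k) * (resid μ m Y ω j * resid μ m Y ω k) ∂μ :=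
          integral_congr_ae (Filter.Eventually.of_forall expand)
      _ = ∑ j, ∑ k, ∫ ω, (v j * v k) * (resid μ m Y ω j * resid μ m Y ω k) ∂μ := by
          rw [integral_finset_sum _ (fun j _ => integrable_finset_sum _ (fun k _ => hprod j k))]
          exact Finset.sum_congr rfl fun j _ =>
            integral_finset_sum _ (fun k _ => hprod j k)
      _ = ∑ j, ∑ k, (v j * v k) * ∫ ω, resid μ m Y ω j * resid μ m Y ω k ∂μ := by
          exact Finset.sum_congr rfl fun j _ => Finset.sum_congr rfl fun k _ =>
            integral_const_mul _ _
      _ = ∑ j, v j * ∑ k, crossCov μ (resid μ m Y) (resid μ m Y) j k * v k := by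
          refine Finset.sum_congr rfl fun j _ => ?_
          rw [Finset.mul_sum]
          refine Finset.sum_congr rfl fun k _ => ?_
          rw [crossCov_resid_self hm hY2 j k]; ring
      _ = ∑ j, v j * (crossCov μ (resid μ m Y) (resid μ m Y)).mulVec v j := by
          refine Finset.sum_congr rfl fun j _ => ?_
          rw [Matrix.mulVec, dotProduct]
      _ = 0 := by
          rw [hv]; simp
  -- hence t = 0 a.e.
  have ht2 : MemLp (fun ω => ∑ j, v j * resid μ m Y ω j) 2 μ := by
    have h := memLp_finsetSum' (μ := μ) (p := 2) Finset.univ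
      (f := fun j ω => v j * resid μ m Y ω j) (fun j _ => (hYt2 j).const_mul (v j))
    have he : (∑ j : Fin N, fun ω => v j * resid μ m Y ω j)
        = fun ω => ∑ j, v j * resid μ m Y ω j := by ext ω; simp
    rwa [he] at h
  have htz : (fun ω => ∑ j, v j * resid μ m Y ω j) =ᵐ[μ] 0 := by
    have h1 : (fun ω => (∑ j, v j * resid μ m Y ω j) ^ 2) =ᵐ[μ] 0 :=
      (integral_eq_zero_iff_of_nonneg (fun ω => sq_nonneg _) ht2.integrable_sq).mp hsq
    filter_upwards [h1] with ω h
    exact pow_eq_zero_iff two_ne_zero |>.mp h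
  -- conclude
  funext i
  have hXc2 : MemLp (fun ω => X ω i - (μ[fun ω' => X ω' i|m]) ω) 2 μ :=
    (hX2 i).sub (memLp_two_condexp hm (hX2 i))
  have hint : ∀ j, Integrable
      (fun ω => v j * ((X ω i - (μ[fun ω' => X ω' i|m]) ω) * resid μ m Y ω j)) μ :=
    fun j => (memLp_mul_int hXc2 (hYt2 j)).const_mul _
  have : (crossCov μ X (resid μ m Y)).mulVec v i
      = ∫ ω, (X ω i - (μ[fun ω' => X ω' i|m]) ω) * (∑ j, v j * resid μ m Y ω j) ∂μ := by
    calc (crossCov μ X (resid μ m Y)).mulVec v i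
        = ∑ j, crossCov μ X (resid μ m Y) i j * v j := by
          rw [Matrix.mulVec, dotProduct]
      _ = ∑ j, ∫ ω, v j * ((X ω i - (μ[fun ω' => X ω' i|m]) ω) * resid μ m Y ω j) ∂μ := by
          refine Finset.sum_congr rfl fun j _ => ?_
          rw [crossCov_X_resid hm hX2 hY2 i j, mul_comm, ← integral_const_mul]
      _ = ∫ ω, ∑ j, v j * ((X ω i - (μ[fun ω' => X ω' i|m]) ω) * resid μ m Y ω j) ∂μ :=
          (integral_finset_sum _ (fun j _ => hint j)).symm
      _ = _ := by
          refine integral_congr_ae (Filter.Eventually.of_forall fun ω => ?_)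
          show (∑ j, v j * ((X ω i - (μ[fun ω' => X ω' i|m]) ω) * resid μ m Y ω j))
              = (X ω i - (μ[fun ω' => X ω' i|m]) ω) * ∑ j, v j * resid μ m Y ω j
          rw [Finset.mul_sum]
          exact Finset.sum_congr rfl fun j _ => by ring
  rw [this]
  have : (fun ω => (X ω i - (μ[fun ω' => X ω' i|m]) ω) * (∑ j, v j * resid μ m Y ω j))
      =ᵐ[μ] 0 := by
    filter_upwards [htz] with ω h
    simp only [Pi.zero_apply] at h ⊢
    rw [h, mul_zero]
  rw [integral_congr_ae this]
  simp
lemma memLp_lincomb {ι : Type} [Fintype ι] {f : ι → Ω → ℝ}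
    (hf : ∀ j, MemLp (f j) 2 μ) (c : ι → ℝ) :
    MemLp (fun ω => ∑ j, c j * f j ω) 2 μ := by
  have h := memLp_finsetSum' (μ := μ) (p := 2) Finset.univ (f := fun j ω => c j * f j ω)
    (fun j _ => (hf j).const_mul (c j))
  have he : (∑ j : ι, fun ω => c j * f j ω) = fun ω => ∑ j, c j * f j ω := by ext ω; simp
  rwa [he] at h

lemma cps_eq {M N : ℕ} (S : Matrix (Fin N) (Fin N) ℝ) (C : Matrix (Fin M) (Fin N) ℝ)
    (P : Matrix (Fin N) (Fin N) ℝ) (hSPS : S * P * S = S)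
    (hnull : ∀ v : Fin N → ℝ, S.mulVec v = 0 → C.mulVec v = 0) :
    C * P * S = C := by
  have key : ∀ j, S.mulVec (fun k => (P * S - 1) k j) = 0 := by
    intro j
    funext l
    have h0 : S * (P * S - 1) = 0 := by
      rw [Matrix.mul_sub, Matrix.mul_one, ← Matrix.mul_assoc, hSPS, sub_self]
    calc S.mulVec (fun k => (P * S - 1) k j) l
        = ∑ k, S l k * (P * S - 1) k j := rfl
      _ = (S * (P * S - 1)) l j := (Matrix.mul_apply).symm
      _ = 0 := by rw [h0]; rfl
  ext i j
  have h := congrFun (hnull _ (key j)) i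
  have h2 : ∑ k, C i k * (P * S - 1) k j = 0 := h
  have h3 : ∑ k, C i k * (P * S) k j - ∑ k, C i k * (1 : Matrix (Fin N) (Fin N) ℝ) k j = 0 := by
    rw [← Finset.sum_sub_distrib, ← h2]
    congr 1; ext k
    simp [Matrix.sub_apply, mul_sub]
  have h5 : ∑ k, C i k * (1 : Matrix (Fin N) (Fin N) ℝ) k j = C i j := by
    simp [Matrix.one_apply, mul_ite]
  have h6 : ∑ k, C i k * (P * S) k j = (C * (P * S)) i j := (Matrix.mul_apply).symm
  rw [h5, h6] at h3
  rw [Matrix.mul_assoc]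
  linarith [h3]

lemma key_ineq (hm : m ≤ mΩ) [IsProbabilityMeasure μ] {M N : ℕ}
    {X : Ω → Fin M → ℝ} {Y : Ω → Fin N → ℝ}
    (hX2 : ∀ i, MemLp (fun ω => X ω i) 2 μ) (hY2 : ∀ j, MemLp (fun ω => Y ω j) 2 μ)
    {P : Matrix (Fin N) (Fin N) ℝ}
    (hSPS : crossCov μ (resid μ m Y) (resid μ m Y) * P * crossCov μ (resid μ m Y) (resid μ m Y)
        = crossCov μ (resid μ m Y) (resid μ m Y))
    (A : Matrix (Fin M) (Fin N) ℝ) (g : Fin M → Ω → ℝ)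
    (hg2 : ∀ i, MemLp (g i) 2 μ) (hgm : ∀ i, StronglyMeasurable[m] (g i)) :
    ∫ ω, ∑ i, (X ω i - ((crossCov μ X (resid μ m Y) * P).mulVec (resid μ m Y ω) i
        + (μ[fun ω' => X ω' i|m]) ω)) ^ 2 ∂μ ≤
      ∫ ω, ∑ i, (X ω i - (A.mulVec (Y ω) i + g i ω)) ^ 2 ∂μ := by
  set C := crossCov μ X (resid μ m Y) with hC
  set S := crossCov μ (resid μ m Y) (resid μ m Y) with hS
  set B := C * P with hB
  -- the residual functions
  have hYt2 : ∀ j, MemLp (fun ω => resid μ m Y ω j) 2 μ := memLp_resid hm hY2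
  -- B * S = C
  have hBS : B * S = C := by
    rw [hB, Matrix.mul_assoc, ← Matrix.mul_assoc]
    exact cps_eq S C P hSPS (nullspace hm hX2 hY2)
  -- definitions of E, W, G
  set E : Fin M → Ω → ℝ := fun i ω =>
    (X ω i - (μ[fun ω' => X ω' i|m]) ω) - ∑ j, B i j * resid μ m Y ω j with hE
  set W : Fin M → Ω → ℝ := fun i ω =>
    (μ[fun ω' => X ω' i|m]) ω - (∑ j, A i j * (μ[fun ω' => Y ω' j|m]) ω) - g i ω with hW
  set G : Fin M → Ω → ℝ := fun i ω =>
    (∑ j, (B i j - A i j) * resid μ m Y ω j) + W i ω with hG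
  -- integrability
  have hE2 : ∀ i, MemLp (E i) 2 μ := by
    intro i
    rw [hE]
    exact ((hX2 i).sub (memLp_two_condexp hm (hX2 i))).sub (memLp_lincomb hYt2 (B i))
  have hW2 : ∀ i, MemLp (W i) 2 μ := by
    intro i
    rw [hW]
    exact ((memLp_two_condexp hm (hX2 i)).sub
      (memLp_lincomb (fun j => memLp_two_condexp hm (hY2 j)) (A i))).sub (hg2 i)
  have hG2 : ∀ i, MemLp (G i) 2 μ := by
    intro i
    rw [hG]
    exact (memLp_lincomb hYt2 (fun j => B i j - A i j)).add (hW2 i)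
  -- strong measurability of W i w.r.t. m
  have hWm : ∀ i, StronglyMeasurable[m] (W i) := by
    intro i
    rw [hW]
    refine (stronglyMeasurable_condExp.sub ?_).sub (hgm i)
    refine Measurable.stronglyMeasurable ?_
    exact Finset.measurable_sum _ fun j _ =>
      (stronglyMeasurable_condExp.measurable.const_mul _)
  -- E is orthogonal to each residual
  have hEY : ∀ i j, ∫ ω, E i ω * resid μ m Y ω j ∂μ = 0 := by
    intro i j
    have hXc2 : MemLp (fun ω => X ω i - (μ[fun ω' => X ω' i|m]) ω) 2 μ :=
      (hX2 i).sub (memLp_two_condexp hm (hX2 i))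
    have hint1 : Integrable (fun ω =>
        (X ω i - (μ[fun ω' => X ω' i|m]) ω) * resid μ m Y ω j) μ :=
      memLp_mul_int hXc2 (hYt2 j)
    have hint2 : ∀ k, Integrable (fun ω =>
        B i k * (resid μ m Y ω k * resid μ m Y ω j)) μ :=
      fun k => (memLp_mul_int (hYt2 k) (hYt2 j)).const_mul _
    have hpt : ∀ ω, E i ω * resid μ m Y ω j
        = (X ω i - (μ[fun ω' => X ω' i|m]) ω) * resid μ m Y ω j
          - ∑ k, B i k * (resid μ m Y ω k * resid μ m Y ω j) := by
      intro ω
      rw [hE]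
      show ((X ω i - (μ[fun ω' => X ω' i|m]) ω) - ∑ k, B i k * resid μ m Y ω k)
          * resid μ m Y ω j = _
      rw [sub_mul, Finset.sum_mul]
      congr 1
      exact Finset.sum_congr rfl fun k _ => by ring
    calc ∫ ω, E i ω * resid μ m Y ω j ∂μ
        = ∫ ω, ((X ω i - (μ[fun ω' => X ω' i|m]) ω) * resid μ m Y ω j
            - ∑ k, B i k * (resid μ m Y ω k * resid μ m Y ω j)) ∂μ :=
          integral_congr_ae (Filter.Eventually.of_forall hpt)
      _ = (∫ ω, (X ω i - (μ[fun ω' => X ω' i|m]) ω) * resid μ m Y ω j ∂μ)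
            - ∫ ω, ∑ k, B i k * (resid μ m Y ω k * resid μ m Y ω j) ∂μ :=
          integral_sub hint1 (integrable_finset_sum _ fun k _ => hint2 k)
      _ = C i j - ∑ k, B i k * S k j := by
          rw [integral_finset_sum _ fun k _ => hint2 k, hC,
            crossCov_X_resid hm hX2 hY2 i j]
          congr 1
          refine Finset.sum_congr rfl fun k _ => ?_
          rw [integral_const_mul, hS, crossCov_resid_self hm hY2 k j]
      _ = C i j - (B * S) i j := by rw [Matrix.mul_apply]
      _ = 0 := by rw [hBS]; ring
  -- E is orthogonal to W
  have hEW : ∀ i, ∫ ω, W i ω * E i ω ∂μ = 0 := by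
    intro i
    have hYint : ∀ j, Integrable (B i j • fun ω => Y ω j) μ :=
      fun j => ((hY2 j).integrable one_le_two).smul _
    have hsum2 : MemLp (fun ω => ∑ j, B i j * Y ω j) 2 μ :=
      memLp_lincomb hY2 (B i)
    have hh2 : MemLp (fun ω => X ω i - ∑ j, B i j * Y ω j) 2 μ := (hX2 i).sub hsum2
    -- conditional expectation of the linear part
    have hcond1 : μ[fun ω => ∑ j, B i j * Y ω j|m]
        =ᵐ[μ] fun ω => ∑ j, B i j * (μ[fun ω' => Y ω' j|m]) ω := by
      have he : (fun ω => ∑ j, B i j * Y ω j)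
          = ∑ j : Fin N, (B i j • fun ω' => Y ω' j) := by
        ext ω; simp [Finset.sum_apply]
      rw [he]
      refine (condExp_finsetSum (fun j _ => hYint j) m).trans ?_
      have hj : ∀ᵐ ω ∂μ, ∀ j : Fin N,
          (μ[B i j • fun ω' => Y ω' j|m]) ω = B i j * (μ[fun ω' => Y ω' j|m]) ω := by
        rw [ae_all_iff]
        intro j
        filter_upwards [condExp_smul (B i j) (fun ω' => Y ω' j) (m := m)] with ω h
        simpa using h
      filter_upwards [hj] with ω h
      simp only [Finset.sum_apply]
      exact Finset.sum_congr rfl fun j _ => h j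
    have hcond : μ[fun ω => X ω i - ∑ j, B i j * Y ω j|m]
        =ᵐ[μ] fun ω => (μ[fun ω' => X ω' i|m]) ω - ∑ j, B i j * (μ[fun ω' => Y ω' j|m]) ω := by
      refine (condExp_sub ((hX2 i).integrable one_le_two)
        (hsum2.integrable one_le_two) m).trans ?_
      filter_upwards [hcond1] with ω h
      simp only [Pi.sub_apply]
      rw [h]
    -- rewrite E i via the conditional expectation
    have hEeq : ∀ᵐ ω ∂μ, E i ω
        = (fun ω' => X ω' i - ∑ j, B i j * Y ω' j) ω
          - (μ[fun ω' => X ω' i - ∑ j, B i j * Y ω' j|m]) ω := by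
      filter_upwards [hcond] with ω h
      rw [h, hE]
      show (X ω i - (μ[fun ω' => X ω' i|m]) ω) - ∑ j, B i j * resid μ m Y ω j = _
      have : ∑ j, B i j * resid μ m Y ω j
          = ∑ j, B i j * Y ω j - ∑ j, B i j * (μ[fun ω' => Y ω' j|m]) ω := by
        rw [← Finset.sum_sub_distrib]
        exact Finset.sum_congr rfl fun j _ => by
          show B i j * (Y ω j - (μ[fun ω' => Y ω' j|m]) ω) = _
          ring
      rw [this]
      ring
    calc ∫ ω, W i ω * E i ω ∂μ
        = ∫ ω, W i ω * ((fun ω' => X ω' i - ∑ j, B i j * Y ω' j) ω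
            - (μ[fun ω' => X ω' i - ∑ j, B i j * Y ω' j|m]) ω) ∂μ := by
          refine integral_congr_ae ?_
          filter_upwards [hEeq] with ω h
          rw [h]
      _ = 0 := ortho hm hh2 (hW2 i) (hWm i)
  -- cross term vanishes
  have hEG : ∀ i, ∫ ω, E i ω * G i ω ∂μ = 0 := by
    intro i
    have hint1 : ∀ j, Integrable (fun ω =>
        (B i j - A i j) * (E i ω * resid μ m Y ω j)) μ :=
      fun j => (memLp_mul_int (hE2 i) (hYt2 j)).const_mul _
    have hint2 : Integrable (fun ω => E i ω * W i ω) μ :=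
      memLp_mul_int (hE2 i) (hW2 i)
    have hpt : ∀ ω, E i ω * G i ω
        = (∑ j, (B i j - A i j) * (E i ω * resid μ m Y ω j)) + E i ω * W i ω := by
      intro ω
      rw [hG]
      show E i ω * ((∑ j, (B i j - A i j) * resid μ m Y ω j) + W i ω) = _
      rw [mul_add, Finset.mul_sum]
      congr 1
      exact Finset.sum_congr rfl fun j _ => by ring
    calc ∫ ω, E i ω * G i ω ∂μ
        = ∫ ω, ((∑ j, (B i j - A i j) * (E i ω * resid μ m Y ω j)) + E i ω * W i ω) ∂μ :=
          integral_congr_ae (Filter.Eventually.of_forall hpt)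
      _ = (∫ ω, ∑ j, (B i j - A i j) * (E i ω * resid μ m Y ω j) ∂μ)
            + ∫ ω, E i ω * W i ω ∂μ :=
          integral_add (integrable_finset_sum _ fun j _ => hint1 j) hint2
      _ = 0 := by
          rw [integral_finset_sum _ fun j _ => hint1 j]
          have h1 : ∀ j : Fin N, ∫ ω, (B i j - A i j) * (E i ω * resid μ m Y ω j) ∂μ = 0 := by
            intro j
            rw [integral_const_mul, hEY i j, mul_zero]
          have h2 : ∫ ω, E i ω * W i ω ∂μ = 0 := by
            rw [← hEW i]
            exact integral_congr_ae (Filter.Eventually.of_forall fun ω => mul_comm _ _)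
          rw [h2, Finset.sum_congr rfl fun j _ => h1 j]
          simp
  -- final assembly
  have hLHS : ∫ ω, ∑ i, (X ω i - (B.mulVec (resid μ m Y ω) i
      + (μ[fun ω' => X ω' i|m]) ω)) ^ 2 ∂μ = ∑ i, ∫ ω, E i ω ^ 2 ∂μ := by
    rw [← integral_finset_sum _ fun i _ => (hE2 i).integrable_sq]
    refine integral_congr_ae (Filter.Eventually.of_forall fun ω => ?_)
    refine Finset.sum_congr rfl fun i _ => ?_
    rw [hE]
    show _ = ((X ω i - (μ[fun ω' => X ω' i|m]) ω) - ∑ j, B i j * resid μ m Y ω j) ^ 2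
    rw [Matrix.mulVec, dotProduct]
    ring
  have hRHS : ∫ ω, ∑ i, (X ω i - (A.mulVec (Y ω) i + g i ω)) ^ 2 ∂μ
      = ∑ i, ∫ ω, (E i ω + G i ω) ^ 2 ∂μ := by
    have hEG2 : ∀ i : Fin M, Integrable (fun ω => (E i ω + G i ω) ^ 2) μ :=
      fun i => ((hE2 i).add (hG2 i)).integrable_sq
    rw [← integral_finset_sum (f := fun i ω => (E i ω + G i ω) ^ 2) _ fun i _ => hEG2 i]
    refine integral_congr_ae (Filter.Eventually.of_forall fun ω => ?_)
    refine Finset.sum_congr rfl fun i _ => ?_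
    have hpt : X ω i - (A.mulVec (Y ω) i + g i ω) = E i ω + G i ω := by
      rw [hE, hG, hW]
      show X ω i - ((∑ j, A i j * Y ω j) + g i ω)
          = ((X ω i - (μ[fun ω' => X ω' i|m]) ω) - ∑ j, B i j * resid μ m Y ω j)
            + ((∑ j, (B i j - A i j) * resid μ m Y ω j)
              + ((μ[fun ω' => X ω' i|m]) ω - (∑ j, A i j * (μ[fun ω' => Y ω' j|m]) ω) - g i ω))
      have h1 : ∑ j, B i j * resid μ m Y ω j
          = ∑ j, B i j * Y ω j - ∑ j, B i j * (μ[fun ω' => Y ω' j|m]) ω := by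
        rw [← Finset.sum_sub_distrib]
        exact Finset.sum_congr rfl fun j _ => by
          show B i j * (Y ω j - (μ[fun ω' => Y ω' j|m]) ω) = _; ring
      have h2 : ∑ j, (B i j - A i j) * resid μ m Y ω j
          = (∑ j, B i j * Y ω j - ∑ j, B i j * (μ[fun ω' => Y ω' j|m]) ω)
            - (∑ j, A i j * Y ω j - ∑ j, A i j * (μ[fun ω' => Y ω' j|m]) ω) := by
        rw [← Finset.sum_sub_distrib, ← Finset.sum_sub_distrib, ← Finset.sum_sub_distrib]
        exact Finset.sum_congr rfl fun j _ => by
          show (B i j - A i j) * (Y ω j - (μ[fun ω' => Y ω' j|m]) ω) = _; ring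
      rw [h1, h2]
      ring
    rw [hpt]
  have hsplit : ∀ i, ∫ ω, (E i ω + G i ω) ^ 2 ∂μ
      = ∫ ω, E i ω ^ 2 ∂μ + (2 * ∫ ω, E i ω * G i ω ∂μ + ∫ ω, G i ω ^ 2 ∂μ) := by
    intro i
    have hi1 : Integrable (fun ω => E i ω ^ 2) μ := (hE2 i).integrable_sq
    have hi2 : Integrable (fun ω => E i ω * G i ω) μ := memLp_mul_int (hE2 i) (hG2 i)
    have hi3 : Integrable (fun ω => G i ω ^ 2) μ := (hG2 i).integrable_sq
    have hpt : ∀ ω, (E i ω + G i ω) ^ 2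
        = E i ω ^ 2 + (2 * (E i ω * G i ω) + G i ω ^ 2) := fun ω => by ring
    have h23 : Integrable (fun ω => 2 * (E i ω * G i ω) + G i ω ^ 2) μ :=
      (hi2.const_mul 2).add hi3
    rw [integral_congr_ae (Filter.Eventually.of_forall hpt),
      integral_add hi1 h23, integral_add (hi2.const_mul 2) hi3, integral_const_mul]
  rw [hRHS]
  calc ∫ ω, ∑ i, (X ω i - (B.mulVec (resid μ m Y ω) i + (μ[fun ω' => X ω' i|m]) ω)) ^ 2 ∂μ
      = ∑ i, ∫ ω, E i ω ^ 2 ∂μ := hLHS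
    _ ≤ ∑ i, ∫ ω, (E i ω + G i ω) ^ 2 ∂μ := by
        refine Finset.sum_le_sum fun i _ => ?_
        rw [hsplit i, hEG i]
        have : 0 ≤ ∫ ω, G i ω ^ 2 ∂μ := integral_nonneg fun ω => sq_nonneg _
        linarith
end PLMMSEproof

/-- the PLMMSE estimator minimizes the MSE over all estimators of the
form `A Y + b(Z)` with `A` a matrix and `b(Z)` square-integrable and measurable. -/
theorem stmt4 {Ω : Type} [MeasurableSpace Ω] (μ : Measure Ω) [IsProbabilityMeasure μ]
    {M N Q : ℕ} (X : Ω → Fin M → ℝ) (Y : Ω → Fin N → ℝ) (Z : Ω → Fin Q → ℝ)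
    (hXm : Measurable X) (hYm : Measurable Y) (hZm : Measurable Z)
    (hX2 : ∀ i, MemLp (fun ω => X ω i) 2 μ) (hY2 : ∀ i, MemLp (fun ω => Y ω i) 2 μ)
    (P : Matrix (Fin N) (Fin N) ℝ)
    (hP : IsMoorePenrose
      (crossCov μ (resid μ (MeasurableSpace.comap Z inferInstance) Y)
        (resid μ (MeasurableSpace.comap Z inferInstance) Y)) P) :
    ∀ (A : Matrix (Fin M) (Fin N) ℝ) (b : (Fin Q → ℝ) → Fin M → ℝ),
      Measurable b → (∀ j, MemLp (fun ω => b (Z ω) j) 2 μ) →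
      ∫ ω, ∑ i, (X ω i - plmmse μ X Y Z P ω i) ^ 2 ∂μ ≤
        ∫ ω, ∑ i, (X ω i - (A.mulVec (Y ω) + b (Z ω)) i) ^ 2 ∂μ := by
  intro A b hbm hb2
  have hm : MeasurableSpace.comap Z inferInstance ≤ ‹MeasurableSpace Ω› := hZm.comap_le
  have hgm : ∀ i, StronglyMeasurable[MeasurableSpace.comap Z inferInstance]
      (fun ω => b (Z ω) i) := by
    intro i
    exact (((measurable_pi_apply i).comp hbm).comp
      (measurable_iff_comap_le.mpr le_rfl)).stronglyMeasurable
  have h := key_ineq hm hX2 hY2 hP.1 A (fun i ω => b (Z ω) i) hb2 hgm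
  exact h
end

section
/- If Y and Z are statistically independent random vectors, then the PLMMSE estimator of X from (Y, Z) equals X̂_Y^L + E[X|Z] − E[X], where X̂_Y^L = Γ_{XY} Γ_{YY}† (Y − E[Y]) + E[X] is the LMMSE estimator of X from Y. -/
open MeasureTheory Matrix ProbabilityTheory

theorem mp_unique {m n : ℕ} {A : Matrix (Fin m) (Fin n) ℝ}
    {P Q : Matrix (Fin n) (Fin m) ℝ}
    (hP : IsMoorePenrose A P) (hQ : IsMoorePenrose A Q) : P = Q := by
  obtain ⟨h1, h2, h3, h4⟩ := hP
  obtain ⟨g1, g2, g3, g4⟩ := hQ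
  have hAt : Aᵀ = Aᵀ * (A * Q) := by
    conv_lhs => rw [← g1]
    rw [Matrix.transpose_mul, g3]
  have hAP : A * P = A * Q := by
    calc A * P = (A * P)ᵀ := h3.symm
    _ = Pᵀ * Aᵀ := Matrix.transpose_mul _ _
    _ = Pᵀ * (Aᵀ * (A * Q)) := by rw [← hAt]
    _ = (Pᵀ * Aᵀ) * (A * Q) := by rw [Matrix.mul_assoc]
    _ = (A * P)ᵀ * (A * Q) := by rw [Matrix.transpose_mul]
    _ = (A * P) * (A * Q) := by rw [h3]
    _ = (A * P * A) * Q := by simp only [Matrix.mul_assoc]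
    _ = A * Q := by rw [h1]
  have hAt' : Aᵀ = (Q * A) * Aᵀ := by
    conv_lhs => rw [← g1]
    rw [Matrix.transpose_mul, Matrix.transpose_mul, ← Matrix.mul_assoc, ← Matrix.transpose_mul, g4]
  have hPA : P * A = Q * A := by
    calc P * A = (P * A)ᵀ := h4.symm
    _ = Aᵀ * Pᵀ := Matrix.transpose_mul _ _
    _ = ((Q * A) * Aᵀ) * Pᵀ := by rw [← hAt']
    _ = (Q * A) * (Aᵀ * Pᵀ) := by rw [Matrix.mul_assoc]
    _ = (Q * A) * (P * A)ᵀ := by rw [Matrix.transpose_mul]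
    _ = (Q * A) * (P * A) := by rw [h4]
    _ = Q * (A * P * A) := by simp only [Matrix.mul_assoc]
    _ = Q * A := by rw [h1]
  calc P = P * A * P := h2.symm
  _ = P * (A * Q) := by rw [Matrix.mul_assoc, hAP]
  _ = (Q * A) * Q := by rw [← Matrix.mul_assoc, hPA]
  _ = Q := g2

/-- if `Y` and `Z` are independent, the PLMMSE estimator equals
`X̂_Y^L + E[X|Z] - E[X]`, where `X̂_Y^L = Γ_{XY} Γ_{YY}† (Y - E[Y]) + E[X]`. -/
theorem stmt7 {Ω : Type} [MeasurableSpace Ω] (μ : Measure Ω) [IsProbabilityMeasure μ]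
    {M N Q : ℕ} (X : Ω → Fin M → ℝ) (Y : Ω → Fin N → ℝ) (Z : Ω → Fin Q → ℝ)
    (hXm : Measurable X) (hYm : Measurable Y) (hZm : Measurable Z)
    (hX2 : ∀ i, MemLp (fun ω => X ω i) 2 μ) (hY2 : ∀ i, MemLp (fun ω => Y ω i) 2 μ)
    (hind : IndepFun Y Z μ)
    (P : Matrix (Fin N) (Fin N) ℝ)
    (hP : IsMoorePenrose
      (crossCov μ (resid μ (MeasurableSpace.comap Z inferInstance) Y)
        (resid μ (MeasurableSpace.comap Z inferInstance) Y)) P)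
    (P' : Matrix (Fin N) (Fin N) ℝ) (hP' : IsMoorePenrose (crossCov μ Y Y) P') :
    plmmse μ X Y Z P =ᵐ[μ] fun ω =>
      ((crossCov μ X Y * P').mulVec (Y ω - meanVec μ Y) + meanVec μ X) +
        condExpVec μ (MeasurableSpace.comap Z inferInstance) X ω - meanVec μ X := by
  set m := MeasurableSpace.comap Z inferInstance with hm
  have hle : m ≤ _ := hZm.comap_le
  haveI : SigmaFinite (μ.trim hle) := inferInstance
  -- conditional expectation of each coordinate of Y is the mean
  have hce : ∀ i, (μ[(fun ω => Y ω i)|m]) =ᵐ[μ] fun _ => meanVec μ Y i := by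
    intro i
    have hi : IndepFun (fun ω => Y ω i) Z μ :=
      hind.comp (measurable_pi_apply i) measurable_id
    exact condExp_indep_eq ((measurable_pi_apply i).comp hYm).comap_le hle
      ((Measurable.of_comap_le le_rfl).stronglyMeasurable) hi
  -- the residual is a.e. the centered Y
  have hres : resid μ m Y =ᵐ[μ] fun ω => Y ω - meanVec μ Y := by
    have h : ∀ᵐ ω ∂μ, ∀ i, (μ[(fun ω' => Y ω' i)|m]) ω = meanVec μ Y i :=
      ae_all_iff.mpr fun i => hce i
    filter_upwards [h] with ω hω
    funext i
    simp only [resid, condExpVec, Pi.sub_apply, hω i]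
  have hYint : ∀ i, Integrable (fun ω => Y ω i) μ := fun i =>
    (hY2 i).integrable one_le_two
  have hmean0 : meanVec μ (resid μ m Y) = 0 := by
    funext j
    have hj : (fun ω => resid μ m Y ω j) =ᵐ[μ] fun ω => Y ω j - meanVec μ Y j := by
      filter_upwards [hres] with ω hω
      rw [hω]; rfl
    have : meanVec μ (resid μ m Y) j = ∫ ω, (Y ω j - meanVec μ Y j) ∂μ :=
      integral_congr_ae hj
    rw [Pi.zero_apply, this, integral_sub (hYint j) (integrable_const _),
      integral_const, probReal_univ, one_smul]
    simp [meanVec]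
  -- crossCov identities
  have hXres : crossCov μ X (resid μ m Y) = crossCov μ X Y := by
    ext i j
    show (∫ ω, (X ω i - meanVec μ X i) * (resid μ m Y ω j - meanVec μ (resid μ m Y) j) ∂μ)
      = ∫ ω, (X ω i - meanVec μ X i) * (Y ω j - meanVec μ Y j) ∂μ
    refine integral_congr_ae ?_
    filter_upwards [hres] with ω hω
    rw [hmean0, hω]
    simp
  have hresres : crossCov μ (resid μ m Y) (resid μ m Y) = crossCov μ Y Y := by
    ext i j
    show (∫ ω, (resid μ m Y ω i - meanVec μ (resid μ m Y) i)
        * (resid μ m Y ω j - meanVec μ (resid μ m Y) j) ∂μ)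
      = ∫ ω, (Y ω i - meanVec μ Y i) * (Y ω j - meanVec μ Y j) ∂μ
    refine integral_congr_ae ?_
    filter_upwards [hres] with ω hω
    rw [hmean0, hω]
    simp
  have hPP' : P = P' := mp_unique (hresres ▸ hP) hP'
  filter_upwards [hres] with ω hω
  show (crossCov μ X (resid μ m Y) * P).mulVec (resid μ m Y ω) + condExpVec μ m X ω = _
  rw [hXres, hPP', hω]
  funext i
  simp only [Pi.add_apply, Pi.sub_apply]
  ring
end
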